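/- arXiv:2308.08455 — 2 statements merged into one kernel-verified Lean document; each statement's English description precedes it below -/
import Mathlib

section
/- For all natural numbers i, l, and every positive integer β, the following identity holds: ∑_{j=0}^{β-1} C(j, i) * (-(β-1-j))^l = (-1)^l * ∑_{j≥0} j! * S(l, j) * C(β, i+j+1), where S(l, j) is the Stirling number of the second kind. In particular the left-hand side is a polynomial in β of degree at most l+i+1. -/
/-- Stirling numbers of the second kind. -/
def stirling2 : ℕ → ℕ → ℕ
  | 0, 0 => 1
  | 0, _ + 1 => 0
  | _ + 1, 0 => 0
  | l + 1, j + 1 => stirling2 l j + (j + 1) * stirling2 l (j + 1)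

lemma stirling2_eq_zero : ∀ l j, l < j → stirling2 l j = 0 := by
  intro l
  induction l with
  | zero => intro j h; cases j with | zero => omega | succ j => rfl
  | succ l ih =>
    intro j h
    cases j with
    | zero => omega
    | succ j => simp [stirling2, ih j (by omega), ih (j+1) (by omega)]

lemma hockey (m : ℕ) : ∀ n, ∑ k ∈ Finset.range (n+1), k.choose m = (n+1).choose (m+1) := by
  intro n
  induction n with
  | zero =>
    cases m with
    | zero => simp
    | succ m => simp [Nat.choose_eq_zero_of_lt (show 1 < m+2 by omega)]
  | succ n ih =>
    rw [Finset.sum_range_succ, ih, Nat.choose_succ_succ (n+1) m, Nat.add_comm]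

lemma vand (i : ℕ) : ∀ n m : ℕ,
    ∑ k ∈ Finset.range (n+1), (k.choose i) * ((n-k).choose m) = (n+1).choose (i+m+1) := by
  induction i with
  | zero =>
    intro n m
    simp only [Nat.choose_zero_right, one_mul, Nat.zero_add]
    have h := Finset.sum_range_reflect (fun k => k.choose m) (n+1)
    simp only [Nat.add_sub_cancel] at h
    rw [h]
    exact hockey m n
  | succ i ih =>
    intro n m
    induction n with
    | zero =>
      simp [Nat.choose_eq_zero_of_lt (show 1 < i+1+m+1 by omega)]
    | succ n ihn =>
      calc ∑ k ∈ Finset.range (n+1+1), k.choose (i+1) * ((n+1)-k).choose m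
          = ∑ k ∈ Finset.range (n+1), (k+1).choose (i+1) * ((n+1)-(k+1)).choose m
              + (0:ℕ).choose (i+1) * ((n+1)-0).choose m := Finset.sum_range_succ' _ _
        _ = ∑ k ∈ Finset.range (n+1), (k.choose i * (n-k).choose m + k.choose (i+1) * (n-k).choose m) := by
              rw [Nat.choose_zero_succ, Nat.zero_mul, Nat.add_zero]
              exact Finset.sum_congr rfl fun k _ => by
                rw [Nat.succ_sub_succ, Nat.choose_succ_succ, Nat.add_mul]
        _ = (n+1).choose (i+m+1) + (n+1).choose (i+1+m+1) := by
              rw [Finset.sum_add_distrib, ih n m, ihn]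
        _ = (n+1+1).choose (i+1+m+1) := by
              rw [show i+1+m+1 = (i+m+1)+1 by omega]
              exact (Nat.choose_succ_succ (n+1) (i+m+1)).symm

lemma mul_choose_key (k m : ℕ) :
    (k:ℤ) * k.choose m = m * k.choose m + (m+1) * k.choose (m+1) := by
  rcases le_or_gt m k with h | h
  · have h1 := Nat.choose_succ_right_eq k m
    have h2 : (↑(k - m) : ℤ) = (k:ℤ) - m := by omega
    have h3 := congrArg (Nat.cast : ℕ → ℤ) h1
    push_cast at h3
    rw [h2] at h3
    linear_combination -h3
  · rw [Nat.choose_eq_zero_of_lt h, Nat.choose_eq_zero_of_lt (by omega)]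
    simp

lemma pow_eq_sum_stirling (k : ℕ) : ∀ l : ℕ,
    (k:ℤ)^l = ∑ m ∈ Finset.range (l+1),
      (m.factorial : ℤ) * (stirling2 l m : ℤ) * (k.choose m : ℤ) := by
  intro l
  induction l with
  | zero => simp [stirling2]
  | succ l ih =>
    have step : ∀ j : ℕ, (j.factorial : ℤ) * (stirling2 l j : ℤ) * (k.choose j : ℤ) * k
        = (j.factorial : ℤ) * (stirling2 l j : ℤ) * (j * k.choose j + (j+1) * k.choose (j+1)) := by
      intro j
      rw [mul_assoc, mul_assoc, mul_comm ((k.choose j : ℤ)) (k:ℤ), ← mul_choose_key]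
      ring
    have hS0 : stirling2 (l+1) 0 = 0 := rfl
    have shift : ∑ m ∈ Finset.range (l+1),
          ((m+1).factorial : ℤ) * ((m:ℤ)+1) * (stirling2 l (m+1) : ℤ) * (k.choose (m+1) : ℤ)
        = ∑ m ∈ Finset.range (l+1),
          (m.factorial : ℤ) * (m : ℤ) * (stirling2 l m : ℤ) * (k.choose m : ℤ) := by
      have hl : (((l+1)).factorial : ℤ) * (((l+1):ℕ) : ℤ) * (stirling2 l (l+1) : ℤ) * (k.choose (l+1) : ℤ) = 0 := by
        simp [stirling2_eq_zero l (l+1) (by omega)]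
      calc ∑ m ∈ Finset.range (l+1),
            ((m+1).factorial : ℤ) * ((m:ℤ)+1) * (stirling2 l (m+1) : ℤ) * (k.choose (m+1) : ℤ)
          = ∑ m ∈ Finset.range (l+1),
            (fun m => (m.factorial : ℤ) * ((m:ℕ):ℤ) * (stirling2 l m : ℤ) * (k.choose m : ℤ)) (m+1) := by
            exact Finset.sum_congr rfl fun j _ => by push_cast; ring
        _ = ∑ m ∈ Finset.range (l+1+1),
            (m.factorial : ℤ) * ((m:ℕ):ℤ) * (stirling2 l m : ℤ) * (k.choose m : ℤ) := by
            rw [Finset.sum_range_succ'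
              (fun m => (m.factorial : ℤ) * ((m:ℕ):ℤ) * (stirling2 l m : ℤ) * (k.choose m : ℤ)) (l+1)]
            simp
        _ = _ := by rw [Finset.sum_range_succ, hl, add_zero]
    calc (k:ℤ)^(l+1)
        = (∑ m ∈ Finset.range (l+1), (m.factorial:ℤ) * (stirling2 l m:ℤ) * (k.choose m:ℤ)) * k := by
          rw [pow_succ, ih]
      _ = ∑ m ∈ Finset.range (l+1), (m.factorial:ℤ) * (stirling2 l m:ℤ) *
            ((m:ℤ) * k.choose m + ((m:ℤ)+1) * k.choose (m+1)) := by
          rw [Finset.sum_mul]; exact Finset.sum_congr rfl fun j _ => step j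
      _ = (∑ m ∈ Finset.range (l+1), (m.factorial:ℤ)*((m:ℕ):ℤ)*(stirling2 l m:ℤ)*(k.choose m:ℤ))
          + ∑ m ∈ Finset.range (l+1), (m.factorial:ℤ)*((m:ℤ)+1)*(stirling2 l m:ℤ)*(k.choose (m+1):ℤ) := by
          rw [← Finset.sum_add_distrib]; exact Finset.sum_congr rfl fun j _ => by ring
      _ = (∑ m ∈ Finset.range (l+1),
            ((m+1).factorial : ℤ) * ((m:ℤ)+1) * (stirling2 l (m+1) : ℤ) * (k.choose (m+1) : ℤ))
          + ∑ m ∈ Finset.range (l+1), ((m+1).factorial:ℤ)*(stirling2 l m:ℤ)*(k.choose (m+1):ℤ) := by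
          rw [shift]
          congr 1
          exact Finset.sum_congr rfl fun j _ => by push_cast [Nat.factorial_succ]; ring
      _ = ∑ m ∈ Finset.range (l+1),
            (fun m => (m.factorial:ℤ) * (stirling2 (l+1) m:ℤ) * (k.choose m:ℤ)) (m+1) := by
          rw [← Finset.sum_add_distrib]
          exact Finset.sum_congr rfl fun j _ => by
            simp only [stirling2]
            push_cast [Nat.factorial_succ]
            ring
      _ = ∑ m ∈ Finset.range (l+1+1), (m.factorial:ℤ) * (stirling2 (l+1) m:ℤ) * (k.choose m:ℤ) := by
          rw [Finset.sum_range_succ'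
            (fun m => (m.factorial:ℤ) * (stirling2 (l+1) m:ℤ) * (k.choose m:ℤ)) (l+1), hS0]
          simp

/-- `∑_{j=0}^{β-1} C(j,i)·(-(β-1-j))^l = (-1)^l ∑_{j≥0} j!·S(l,j)·C(β,i+j+1)`
(the right-hand sum is finite since `S(l,j)=0` for `j > l`). -/
theorem choose_mul_pow_sum_eq_stirling (i l : ℕ) (β : ℕ) (hβ : 0 < β) :
    ∑ j ∈ Finset.range β, (j.choose i : ℤ) * (-((β : ℤ) - 1 - j)) ^ l
      = (-1 : ℤ) ^ l *
          ∑ j ∈ Finset.range (l + 1),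
            (j.factorial : ℤ) * (stirling2 l j : ℤ) * (β.choose (i + j + 1) : ℤ) := by
  have hβ1 : β - 1 + 1 = β := Nat.succ_pred_eq_of_pos hβ
  have hrefl : ∑ j ∈ Finset.range β, (j.choose i : ℤ) * (-((β : ℤ) - 1 - j)) ^ l
      = ∑ j ∈ Finset.range β, (((β-1-j).choose i : ℤ)) * (-((j:ℕ):ℤ)) ^ l := by
    rw [← Finset.sum_range_reflect (fun j => (((β-1-j).choose i : ℤ)) * (-((j:ℕ):ℤ)) ^ l) β]
    apply Finset.sum_congr rfl
    intro j hj
    simp only [Finset.mem_range] at hj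
    have e1 : β - 1 - (β - 1 - j) = j := by omega
    have e2 : ((β - 1 - j : ℕ) : ℤ) = (β:ℤ) - 1 - j := by omega
    simp only [e1, e2]
  have hinner : ∀ m, ∑ j ∈ Finset.range β, (β-1-j).choose i * j.choose m
      = β.choose (i+m+1) := by
    intro m
    have h := vand m (β-1) i
    rw [hβ1] at h
    rw [show i+m+1 = m+i+1 by omega, ← h]
    exact Finset.sum_congr rfl fun j _ => Nat.mul_comm _ _
  have expand : ∀ j : ℕ, (((β-1-j).choose i : ℤ)) * (-((j:ℕ):ℤ)) ^ l
      = ∑ m ∈ Finset.range (l+1),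
          (-1:ℤ)^l * ((m.factorial:ℤ) * (stirling2 l m : ℤ) * (((β-1-j).choose i * j.choose m : ℕ) : ℤ)) := by
    intro j
    rw [neg_pow, pow_eq_sum_stirling j l, Finset.mul_sum, Finset.mul_sum]
    apply Finset.sum_congr rfl
    intro m _
    push_cast
    ring
  calc ∑ j ∈ Finset.range β, (j.choose i : ℤ) * (-((β : ℤ) - 1 - j)) ^ l
      = ∑ j ∈ Finset.range β, ∑ m ∈ Finset.range (l+1),
          (-1:ℤ)^l * ((m.factorial:ℤ) * (stirling2 l m : ℤ) * (((β-1-j).choose i * j.choose m : ℕ) : ℤ)) := by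
        rw [hrefl]; exact Finset.sum_congr rfl fun j _ => expand j
    _ = ∑ m ∈ Finset.range (l+1), ∑ j ∈ Finset.range β,
          (-1:ℤ)^l * ((m.factorial:ℤ) * (stirling2 l m : ℤ) * (((β-1-j).choose i * j.choose m : ℕ) : ℤ)) :=
        Finset.sum_comm
    _ = (-1 : ℤ) ^ l * ∑ m ∈ Finset.range (l + 1),
          (m.factorial : ℤ) * (stirling2 l m : ℤ) * (β.choose (i + m + 1) : ℤ) := by
        rw [Finset.mul_sum]
        apply Finset.sum_congr rfl
        intro m _
        rw [← Finset.mul_sum, ← Finset.mul_sum, ← Nat.cast_sum, hinner m]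
end

section
/- Fix natural numbers g ≥ 1, n ≥ 1, and b with b ≤ 4g + n - 3 and b ≥ 2g - 3. Then ∑_{k=0}^{2g+n} (1/(k + 2g - b - 3)!) * (B_{2g+n-k} / ((2g+n-k)! * 2^k)) = (1 - 2^{4g+n-b-4}) / 2^{2g+n-1} * B_{4g+n-b-3} / (4g+n-b-3)!, where terms with negative factorial argument are taken to be zero. -/
open PowerSeries Polynomial in
lemma bernoulli_poly_eval_half (m : ℕ) :
    (Polynomial.bernoulli m).eval (1/2 : ℚ) = (2 * (1/2:ℚ)^m - 1) * _root_.bernoulli m := by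
  set u : ℚ⟦X⟧ := rescale (1/2 : ℚ) (exp ℚ) with hu
  have huu : u * u = exp ℚ := by
    rw [hu, exp_mul_exp_eq_exp_add]; norm_num
  set B := bernoulliPowerSeries ℚ with hB
  have hBu : rescale (1/2 : ℚ) B * (u - 1) = PowerSeries.C (1/2 : ℚ) * PowerSeries.X := by
    calc rescale (1/2 : ℚ) B * (u - 1) = rescale (1/2 : ℚ) (B * (exp ℚ - 1)) := by
          rw [map_mul, map_sub, map_one]
      _ = PowerSeries.C (1/2 : ℚ) * PowerSeries.X := by
          rw [hB, bernoulliPowerSeries_mul_exp_sub_one, rescale_X]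
  have h2c : (2 : ℚ⟦X⟧) * PowerSeries.C (1/2 : ℚ) = 1 := by
    rw [show (2:ℚ⟦X⟧) = PowerSeries.C (2:ℚ) from (map_ofNat (PowerSeries.C (R := ℚ)) 2).symm, ← map_mul]
    norm_num
  have key : (mk fun n => aeval (1/2 : ℚ) ((1 / n.factorial : ℚ) • Polynomial.bernoulli n))
      = 2 * rescale (1/2 : ℚ) B - B := by
    have hne : (exp ℚ - 1) ≠ 0 := by
      intro h
      have := congrArg (PowerSeries.coeff (R := ℚ) 1) h
      simp [coeff_exp] at this
    apply mul_right_cancel₀ hne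
    rw [bernoulli_generating_function, sub_mul, hB, bernoulliPowerSeries_mul_exp_sub_one, ← hB,
      ← hu]
    have hfac : exp ℚ - 1 = (u - 1) * (u + 1) := by rw [← huu]; ring
    calc PowerSeries.X * u
        = (2 * PowerSeries.C (1/2 : ℚ)) * (PowerSeries.X * (u + 1)) - PowerSeries.X := by
          rw [h2c]; ring
      _ = 2 * (rescale (1/2 : ℚ) B * (u - 1)) * (u + 1) - PowerSeries.X := by
          rw [hBu]; ring
      _ = 2 * rescale (1/2 : ℚ) B * (exp ℚ - 1) - PowerSeries.X := by
          rw [hfac]; ring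
  have hcoeff := congrArg (PowerSeries.coeff (R := ℚ) m) key
  rw [coeff_mk, map_sub, two_mul, map_add, coeff_rescale, hB, bernoulliPowerSeries, coeff_mk] at hcoeff
  rw [show (aeval (1/2 : ℚ)) ((1 / (m.factorial : ℚ)) • Polynomial.bernoulli m)
      = (1 / (m.factorial : ℚ)) * (Polynomial.bernoulli m).eval (1/2 : ℚ) from by
    rw [map_smul, smul_eq_mul, Polynomial.coe_aeval_eq_eval]] at hcoeff
  have hm : (m.factorial : ℚ) ≠ 0 := Nat.cast_ne_zero.2 m.factorial_ne_zero
  simp only [Algebra.algebraMap_self, RingHom.id_apply] at hcoeff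
  calc (Polynomial.bernoulli m).eval (1/2 : ℚ)
      = (m.factorial : ℚ) * ((1 / (m.factorial : ℚ)) * (Polynomial.bernoulli m).eval (1/2 : ℚ)) := by
        field_simp
    _ = (m.factorial : ℚ) * ((1/2:ℚ) ^ m * (_root_.bernoulli m / m.factorial)
          + (1/2:ℚ) ^ m * (_root_.bernoulli m / m.factorial) - _root_.bernoulli m / m.factorial) := by
        rw [hcoeff]
    _ = (2 * (1/2:ℚ)^m - 1) * _root_.bernoulli m := by
        field_simp
        ring

lemma aux_pow (M m : ℕ) (h : 1 ≤ M + m) (c : ℚ) :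
    ((2:ℚ)^M * m.factorial)⁻¹ * ((2 * (1/2:ℚ)^m - 1) * c)
      = (1 - (2:ℚ)^((m:ℤ)-1)) / 2^(M+m-1) * c / m.factorial := by
  cases m with
  | zero =>
    obtain ⟨M', rfl⟩ : ∃ M', M = M' + 1 := ⟨M - 1, by omega⟩
    rw [show ((0:ℕ):ℤ) - 1 = -1 by norm_num, zpow_neg_one,
      show M' + 1 + 0 - 1 = M' by omega, pow_succ]
    norm_num [Nat.factorial]
    rw [div_div, eq_div_iff (by positivity)]
    left
    field_simp
  | succ k =>
    rw [show ((k+1:ℕ):ℤ) - 1 = (k:ℤ) by push_cast; ring, zpow_natCast,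
      show M + (k+1) - 1 = M + k by omega]
    have hf : ((k+1).factorial : ℚ) ≠ 0 := Nat.cast_ne_zero.2 (Nat.factorial_ne_zero _)
    field_simp
    have : (1/2:ℚ)^k * 2^k = 1 := by rw [← mul_pow]; norm_num
    linear_combination (c * 2 ^ M) * this

/-- Closed-form evaluation of the constant `C_{b,g,n}` (times `(b+3-2g)!`):
`∑_{k=0}^{2g+n} (1/(k+2g-b-3)!)·B_{2g+n-k}/((2g+n-k)!·2^k)
  = (1 - 2^{4g+n-b-4})/2^{2g+n-1} · B_{4g+n-b-3}/(4g+n-b-3)!`,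
where `1/(k+2g-b-3)!` is interpreted as `0` whenever `k+2g-b-3 < 0`. -/
theorem bernoulli_constant_C (g n b : ℕ) (hg : 1 ≤ g) (hn : 1 ≤ n)
    (hb₁ : (b : ℤ) ≤ 4 * g + n - 3) (hb₂ : (2 * g : ℤ) - 3 ≤ b) :
    ∑ k ∈ Finset.range (2 * g + n + 1),
        (if (k : ℤ) + 2 * g - b - 3 < 0 then (0 : ℚ)
          else ((((k : ℤ) + 2 * g - b - 3).toNat.factorial : ℚ))⁻¹) *
          bernoulli (2 * g + n - k) / ((2 * g + n - k).factorial * 2 ^ k)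
      = (1 - (2 : ℚ) ^ ((4 * g + n : ℤ) - b - 4)) / 2 ^ (2 * g + n - 1) *
          bernoulli (4 * g + n - 3 - b) / (4 * g + n - 3 - b).factorial := by
  have h2g : 2 * g ≤ b + 3 := by omega
  have hbN : b + 3 ≤ 4 * g + n := by omega
  set M := b + 3 - 2 * g with hM
  set m := 4 * g + n - 3 - b with hm
  have hMZ : (M : ℤ) = (b : ℤ) + 3 - 2 * g := by omega
  have hMm : M + m = 2 * g + n := by omega
  -- step 1: drop the zero terms
  rw [show ∑ k ∈ Finset.range (2 * g + n + 1),
        (if (k : ℤ) + 2 * g - b - 3 < 0 then (0 : ℚ)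
          else ((((k : ℤ) + 2 * g - b - 3).toNat.factorial : ℚ))⁻¹) *
          bernoulli (2 * g + n - k) / ((2 * g + n - k).factorial * 2 ^ k)
      = ∑ k ∈ Finset.Ico M (2 * g + n + 1),
        (if (k : ℤ) + 2 * g - b - 3 < 0 then (0 : ℚ)
          else ((((k : ℤ) + 2 * g - b - 3).toNat.factorial : ℚ))⁻¹) *
          bernoulli (2 * g + n - k) / ((2 * g + n - k).factorial * 2 ^ k) from by
    refine (Finset.sum_subset ?_ ?_).symm
    · intro x hx
      simp only [Finset.mem_Ico, Finset.mem_range] at *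
      omega
    · intro x hx hx'
      simp only [Finset.mem_Ico, Finset.mem_range] at hx hx'
      have : (x : ℤ) + 2 * g - b - 3 < 0 := by omega
      rw [if_pos this, zero_mul, zero_div]]
  rw [Finset.sum_Ico_eq_sum_range, show 2 * g + n + 1 - M = m + 1 by omega]
  -- step 2: simplify each term
  have hterm : ∀ j ∈ Finset.range (m + 1),
      (if ((M + j : ℕ) : ℤ) + 2 * g - b - 3 < 0 then (0 : ℚ)
          else ((((M + j : ℕ) : ℤ) + 2 * g - b - 3).toNat.factorial : ℚ)⁻¹) *
          bernoulli (2 * g + n - (M + j)) / ((2 * g + n - (M + j)).factorial * 2 ^ (M + j))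
      = ((2:ℚ)^M * m.factorial)⁻¹ *
          (bernoulli (m - j) * (m.choose j) * (1/2:ℚ)^j) := by
    intro j hj
    simp only [Finset.mem_range] at hj
    have hjm : j ≤ m := by omega
    have hcond : ¬ (((M + j : ℕ) : ℤ) + 2 * g - b - 3 < 0) := by push_cast; omega
    rw [if_neg hcond, show (((M + j : ℕ) : ℤ) + 2 * g - b - 3).toNat = j by omega,
      show 2 * g + n - (M + j) = m - j by omega, pow_add]
    have hfm : ((m).factorial : ℚ) = (m.choose j) * j.factorial * (m - j).factorial := by
      rw [← Nat.choose_mul_factorial_mul_factorial hjm]; push_cast; ring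
    have h1 : (j.factorial : ℚ) ≠ 0 := Nat.cast_ne_zero.2 (Nat.factorial_ne_zero _)
    have h2 : ((m - j).factorial : ℚ) ≠ 0 := Nat.cast_ne_zero.2 (Nat.factorial_ne_zero _)
    have h3 : (m.choose j : ℚ) ≠ 0 := Nat.cast_ne_zero.2 (Nat.choose_pos hjm).ne'
    rw [hfm]
    field_simp
    have : (1/2:ℚ)^j * 2^j = 1 := by rw [← mul_pow]; norm_num
    linear_combination (-bernoulli (m - j)) * this
  rw [Finset.sum_congr rfl hterm, ← Finset.mul_sum]
  -- step 3: identify the sum with the Bernoulli polynomial at 1/2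
  have heval : ∑ j ∈ Finset.range (m + 1),
      (bernoulli (m - j) * (m.choose j) * (1/2:ℚ)^j)
      = (Polynomial.bernoulli m).eval (1/2 : ℚ) := by
    rw [Polynomial.bernoulli_def, Polynomial.eval_finset_sum]
    refine Finset.sum_congr rfl fun i _ => ?_
    rw [Polynomial.eval_monomial]
  rw [heval, bernoulli_poly_eval_half]
  -- step 4: arithmetic
  rw [show ((4 * g + n : ℤ)) - b - 4 = (m : ℤ) - 1 by omega,
    show 2 * g + n - 1 = M + m - 1 by omega]
  exact aux_pow M m (by omega) _
end
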